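/- arXiv:1911.02053 — 2 statements merged into one kernel-verified Lean document; each statement's English description precedes it below -/
import Mathlib

section
/- For symmetric positive definite matrices Σ₁, Σ₂, the matrix T = Σ₁^{−1/2} (Σ₁^{1/2} Σ₂ Σ₁^{1/2})^{1/2} Σ₁^{−1/2} is symmetric positive definite and satisfies T Σ₁ T = Σ₂. -/
open Matrix

namespace Matrix.PosSemidef

open scoped ComplexOrder

/-- The square root of a positive semidefinite matrix, as defined in Mathlib (Dec 2024);
removed from current Mathlib, reinstated here with its old definition. -/
noncomputable def sqrt {n 𝕜 : Type*} [Fintype n] [RCLike 𝕜] [DecidableEq n]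
    {A : Matrix n n 𝕜} (hA : PosSemidef A) : Matrix n n 𝕜 :=
  (hA.1.eigenvectorUnitary : Matrix n n 𝕜) *
    diagonal (((↑) : ℝ → 𝕜) ∘ (√·) ∘ hA.1.eigenvalues) *
    (star hA.1.eigenvectorUnitary : Matrix n n 𝕜)

lemma posSemidef_sqrt {n 𝕜 : Type*} [Fintype n] [RCLike 𝕜] [DecidableEq n]
    {A : Matrix n n 𝕜} (hA : PosSemidef A) : PosSemidef hA.sqrt := by
  unfold sqrt
  have hd : PosSemidef (diagonal (((↑) ∘ (√·) ∘ hA.1.eigenvalues : n → 𝕜))) := by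
    refine posSemidef_diagonal_iff.mpr fun i => ?_
    simp only [Function.comp_apply]
    exact_mod_cast Real.sqrt_nonneg _
  have := hd.mul_mul_conjTranspose_same (hA.1.eigenvectorUnitary : Matrix n n 𝕜)
  simpa [star_eq_conjTranspose] using this

lemma sqrt_mul_self {n 𝕜 : Type*} [Fintype n] [RCLike 𝕜] [DecidableEq n]
    {A : Matrix n n 𝕜} (hA : PosSemidef A) : hA.sqrt * hA.sqrt = A := by
  conv_rhs => rw [hA.1.spectral_theorem]
  rw [Unitary.conjStarAlgAut_apply]
  unfold sqrt
  have hU : (star hA.1.eigenvectorUnitary : Matrix n n 𝕜) * (hA.1.eigenvectorUnitary : Matrix n n 𝕜) = 1 :=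
    Unitary.coe_star_mul_self _
  have hD : diagonal (((↑) : ℝ → 𝕜) ∘ (√·) ∘ hA.1.eigenvalues) *
      diagonal (((↑) : ℝ → 𝕜) ∘ (√·) ∘ hA.1.eigenvalues) =
      diagonal (RCLike.ofReal ∘ hA.1.eigenvalues) := by
    rw [diagonal_mul_diagonal]
    congr 1
    funext i
    simp only [Function.comp_apply]
    rw [← RCLike.ofReal_mul, Real.mul_self_sqrt (hA.eigenvalues_nonneg i)]
  calc _ = (hA.1.eigenvectorUnitary : Matrix n n 𝕜) *
        (diagonal (((↑) : ℝ → 𝕜) ∘ (√·) ∘ hA.1.eigenvalues) *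
          ((star hA.1.eigenvectorUnitary : Matrix n n 𝕜) * (hA.1.eigenvectorUnitary : Matrix n n 𝕜)) *
          diagonal (((↑) : ℝ → 𝕜) ∘ (√·) ∘ hA.1.eigenvalues)) *
        (star hA.1.eigenvectorUnitary : Matrix n n 𝕜) := by simp only [Matrix.mul_assoc]
    _ = _ := by rw [hU, Matrix.mul_one, hD]

end Matrix.PosSemidef

/-- `√Σ₁ Σ₂ √Σ₁` is positive semidefinite. -/
lemma sqrt_mul_sqrt_posSemidef {d : ℕ} {S1 S2 : Matrix (Fin d) (Fin d) ℝ}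
    (h1 : S1.PosSemidef) (h2 : S2.PosSemidef) :
    (h1.sqrt * S2 * h1.sqrt).PosSemidef := by
  have h := h2.mul_mul_conjTranspose_same h1.sqrt
  rwa [h1.posSemidef_sqrt.1.eq] at h

lemma posDef_of_posSemidef_det_ne_zero {d : ℕ} {M : Matrix (Fin d) (Fin d) ℝ}
    (hM : M.PosSemidef) (hdet : M.det ≠ 0) : M.PosDef := by
  refine posDef_iff_dotProduct_mulVec.mpr ⟨hM.1, fun x hx => lt_of_le_of_ne (hM.dotProduct_mulVec_nonneg x) fun h => ?_⟩
  have h0 : M *ᵥ x = 0 := (hM.dotProduct_mulVec_zero_iff x).mp h.symm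
  have : x = 0 := by
    have := congrArg (M⁻¹ *ᵥ ·) h0
    simpa [mulVec_mulVec, Matrix.nonsing_inv_mul M (isUnit_iff_ne_zero.mpr hdet)] using this
  exact hx this

lemma transport_aux {d : ℕ} (A R S1 S2 : Matrix (Fin d) (Fin d) ℝ)
    (hAH : A.IsHermitian) (hRps : R.PosSemidef)
    (hAA : A * A = S1) (hRR : R * R = A * S2 * A)
    (hdA : A.det ≠ 0) (hdR : R.det ≠ 0) :
    (A⁻¹ * R * A⁻¹).PosDef ∧ (A⁻¹ * R * A⁻¹) * S1 * (A⁻¹ * R * A⁻¹) = S2 := by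
  have hdAu : IsUnit A.det := isUnit_iff_ne_zero.mpr hdA
  have hAinv : A⁻¹ * A = 1 := Matrix.nonsing_inv_mul A hdAu
  have hAAinv : A * A⁻¹ = 1 := Matrix.mul_nonsing_inv A hdAu
  have hAinvH : A⁻¹.IsHermitian := hAH.inv
  constructor
  · apply posDef_of_posSemidef_det_ne_zero
    · have := hRps.mul_mul_conjTranspose_same A⁻¹
      rwa [hAinvH.eq] at this
    · rw [det_mul, det_mul, det_nonsing_inv]
      have : Ring.inverse A.det ≠ 0 := by
        rw [Ring.inverse_eq_inv]; exact inv_ne_zero hdA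
      exact mul_ne_zero (mul_ne_zero this hdR) this
  · calc A⁻¹ * R * A⁻¹ * S1 * (A⁻¹ * R * A⁻¹)
        = A⁻¹ * R * (A⁻¹ * A) * (A * A⁻¹) * R * A⁻¹ := by
          rw [← hAA]; noncomm_ring
    _ = A⁻¹ * (R * R) * A⁻¹ := by rw [hAinv, hAAinv]; noncomm_ring
    _ = (A⁻¹ * A) * S2 * (A * A⁻¹) := by rw [hRR]; noncomm_ring
    _ = S2 := by rw [hAinv, hAAinv, Matrix.one_mul, Matrix.mul_one]

/-- The Gaussian optimal transport map
`T = Σ₁^{−1/2} (Σ₁^{1/2} Σ₂ Σ₁^{1/2})^{1/2} Σ₁^{−1/2}` is symmetric positive definite and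
pushes `Σ₁` to `Σ₂`: `T Σ₁ T = Σ₂`. -/
theorem transport_map_posDef_and_pushforward {d : ℕ} {S1 S2 : Matrix (Fin d) (Fin d) ℝ}
    (h1 : S1.PosDef) (h2 : S2.PosDef)
    (T : Matrix (Fin d) (Fin d) ℝ)
    (hT : T = h1.posSemidef.sqrt⁻¹ *
      (sqrt_mul_sqrt_posSemidef h1.posSemidef h2.posSemidef).sqrt * h1.posSemidef.sqrt⁻¹) :
    T.PosDef ∧ T * S1 * T = S2 := by
  have hAA : h1.posSemidef.sqrt * h1.posSemidef.sqrt = S1 := h1.posSemidef.sqrt_mul_self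
  have hdA : h1.posSemidef.sqrt.det ≠ 0 := by
    intro h
    have : S1.det = 0 := by rw [← hAA, det_mul, h, mul_zero]
    exact (ne_of_gt h1.det_pos) this
  have hRR := (sqrt_mul_sqrt_posSemidef h1.posSemidef h2.posSemidef).sqrt_mul_self
  have hdR : (sqrt_mul_sqrt_posSemidef h1.posSemidef h2.posSemidef).sqrt.det ≠ 0 := by
    intro h
    have h0 : (h1.posSemidef.sqrt * S2 * h1.posSemidef.sqrt).det = 0 := by
      rw [← hRR, det_mul, h, mul_zero]
    rw [det_mul, det_mul] at h0
    exact mul_ne_zero (mul_ne_zero hdA (ne_of_gt h2.det_pos)) hdA h0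
  rw [hT]
  exact transport_aux _ _ _ _ h1.posSemidef.posSemidef_sqrt.1
    (sqrt_mul_sqrt_posSemidef h1.posSemidef h2.posSemidef).posSemidef_sqrt
    hAA hRR hdA hdR
end

section
/- For strictly increasing tuples p, q ∈ ℝ^K, the quotient distance on Conf_K(ℝ)/S_K satisfies D([p],[q])² = Σ_{i=1}^K (p_i − q_i)², i.e., the quotient distance between orbits of sorted tuples equals the Euclidean distance between the sorted representatives. -/
/-- For strictly increasing tuples `p, q`, the squared quotient distance on
`Conf_K(ℝ)/S_K` equals the Euclidean distance between the sorted representatives: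
`min_{σ∈S_K} ∑ᵢ (pᵢ − q_{σ(i)})² = ∑ᵢ (pᵢ − qᵢ)²`. -/
theorem quotient_dist_sorted {K : ℕ} (hK : 0 < K) (p q : Fin K → ℝ)
    (hp : StrictMono p) (hq : StrictMono q) :
    Finset.univ.inf' Finset.univ_nonempty
        (fun σ : Equiv.Perm (Fin K) => ∑ i, (p i - q (σ i)) ^ 2) =
      ∑ i, (p i - q i) ^ 2 := by
  apply le_antisymm
  · have := Finset.inf'_le (b := (1 : Equiv.Perm (Fin K)))
      (fun σ : Equiv.Perm (Fin K) => ∑ i, (p i - q (σ i)) ^ 2) (Finset.mem_univ 1)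
    exact this.trans (le_of_eq (by simp))
  · apply Finset.le_inf'
    intro σ _
    have hmono : Monovary p q := hp.monotone.monovary hq.monotone
    have hre : ∑ i, p i * q (σ i) ≤ ∑ i, p i * q i :=
      hmono.sum_mul_comp_perm_le_sum_mul
    have hq' : ∑ i, q (σ i) ^ 2 = ∑ i, q i ^ 2 :=
      Equiv.sum_comp σ (fun i => q i ^ 2)
    have expand : ∀ (r : Fin K → ℝ), ∑ i, (p i - r i) ^ 2 =
        ∑ i, p i ^ 2 + ∑ i, r i ^ 2 - 2 * ∑ i, p i * r i := by
      intro r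
      rw [Finset.mul_sum, ← Finset.sum_add_distrib, ← Finset.sum_sub_distrib]
      congr 1; ext i; ring
    rw [expand (fun i => q (σ i)), expand q, hq']
    linarith
end
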